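/- arXiv:2105.06884 — 4 statements merged into one kernel-verified Lean document; each statement's English description precedes it below -/
import Mathlib

section
/- Let g : [t₀,T] × ℝ → ℝ be measurable with |g(t,x)| ≤ (C/t^{q}) · exp(−M (x−x₀)²/t) for all t ∈ [t₀,T], x ∈ ℝ, where 0 < t₀ < T and C, M, q > 0. Define f(x) = (1/(T−t₀)) ∫_{t₀}^T G(t,x) dt where G(t,·) is an antiderivative-type family such that ∂ₓ G(t,x) = g(t,x) (i.e., G(t,·) is continuously differentiable with derivative g(t,·)). Then for every θ ∈ ℝ: ∫ℝ (f(x+θ) − f(x))² dx ≤ (𝔠 / t₀^{2q}) (θ² + |θ|³), where 𝔠 depends only on C, M, T and not on t₀ or θ. -/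
open MeasureTheory Real Set intervalIntegral

/-- Corollary 1 (Nikol'skii-type estimate): if `f` is the time-average over
`[t₀,T]` of a family `G t` whose spatial derivative `g t` satisfies a Gaussian
bound with singularity `t^{-q}`, then the squared L² increment of `f` is
bounded by `(𝔠 / t₀^(2q)) (θ² + |θ|³)`, with `𝔠` independent of `t₀` and `θ`. -/
theorem stmt_1 (C M q T x₀ : ℝ) (hC : 0 < C) (hM : 0 < M) (hq : 0 < q) (hT : 0 < T) :
    ∃ 𝔠 > 0, ∀ (t₀ : ℝ), 0 < t₀ → t₀ < T →
      ∀ (g G : ℝ → ℝ → ℝ) (f : ℝ → ℝ),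
        Measurable (Function.uncurry g) →
        (∀ t ∈ Icc t₀ T, ∀ x : ℝ, HasDerivAt (G t) (g t x) x) →
        (∀ t ∈ Icc t₀ T, ∀ x : ℝ,
          |g t x| ≤ C / t ^ q * Real.exp (-M * (x - x₀) ^ 2 / t)) →
        (∀ x : ℝ, f x = (1 / (T - t₀)) * ∫ t in t₀..T, G t x) →
        ∀ θ : ℝ,
          (∫ x : ℝ, (f (x + θ) - f x) ^ 2) ≤ 𝔠 / t₀ ^ (2 * q) * (θ ^ 2 + |θ| ^ 3) := by
  set b : ℝ := M / T with hb_def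
  have hb : 0 < b := div_pos hM hT
  set s : ℝ := Real.sqrt (π / b) with hs_def
  have hs : 0 ≤ s := Real.sqrt_nonneg _
  refine ⟨2 * C ^ 2 * (1 + s), by positivity, ?_⟩
  intro t₀ ht₀ ht₀T g G f hgm hderiv hbound hf θ
  set c : ℝ := C / t₀ ^ q with hc_def
  have hP : (0:ℝ) < t₀ ^ (2 * q) := Real.rpow_pos_of_pos ht₀ _
  have hc : 0 < c := div_pos hC (Real.rpow_pos_of_pos ht₀ _)
  -- uniform Gaussian bound on g
  have hKc : ∀ t ∈ Icc t₀ T, ∀ y : ℝ, |g t y| ≤ c * Real.exp (-b * (y - x₀) ^ 2) := by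
    intro t ht y
    refine (hbound t ht y).trans (mul_le_mul ?_ ?_ (Real.exp_nonneg _) hc.le)
    · apply div_le_div_of_nonneg_left hC.le (Real.rpow_pos_of_pos ht₀ _)
      exact Real.rpow_le_rpow ht₀.le ht.1 hq.le
    · apply Real.exp_le_exp.2
      have htpos : 0 < t := lt_of_lt_of_le ht₀ ht.1
      have h2 : M * (y - x₀) ^ 2 / T ≤ M * (y - x₀) ^ 2 / t :=
        div_le_div_of_nonneg_left (by positivity) htpos ht.2
      have hbeq : -b * (y - x₀) ^ 2 = -(M * (y - x₀) ^ 2 / T) := by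
        rw [hb_def]; ring
      have hteq : -M * (y - x₀) ^ 2 / t = -(M * (y - x₀) ^ 2 / t) := by ring
      rw [hbeq, hteq]
      linarith
  have hgc : ∀ t ∈ Icc t₀ T, ∀ y : ℝ, |g t y| ≤ c := by
    intro t ht y
    refine (hKc t ht y).trans ?_
    nth_rewrite 2 [← mul_one c]
    apply mul_le_mul_of_nonneg_left _ hc.le
    apply Real.exp_le_one_iff.2
    nlinarith [sq_nonneg (y - x₀)]
  -- the dominating profile
  set W : ℝ → ℝ := fun x => Real.exp (-b * (max (|x - x₀| - |θ|) 0) ^ 2) with hW_def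
  have hW0 : ∀ x, 0 < W x := fun x => Real.exp_pos _
  have hW1 : ∀ x, W x ≤ 1 := by
    intro x
    apply Real.exp_le_one_iff.2
    nlinarith [sq_nonneg (max (|x - x₀| - |θ|) 0)]
  -- pointwise bound on |f(x+θ) - f(x)|
  have hpt : ∀ x : ℝ, |f (x + θ) - f x| ≤ |θ| * c * W x := by
    intro x
    have hKW : ∀ t ∈ Icc t₀ T, ∀ y ∈ Set.uIoc x (x + θ), ‖g t y‖ ≤ c * W x := by
      intro t ht y hy
      rw [Real.norm_eq_abs]
      refine (hKc t ht y).trans (mul_le_mul_of_nonneg_left ?_ hc.le)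
      apply Real.exp_le_exp.2
      have hxy : |x - y| ≤ |θ| := by
        rcases hy with ⟨h1, h2⟩
        have hl : x - |θ| ≤ x ⊓ (x + θ) :=
          le_min (by linarith [abs_nonneg θ]) (by linarith [neg_abs_le θ])
        have hr : x ⊔ (x + θ) ≤ x + |θ| :=
          max_le (by linarith [abs_nonneg θ]) (by linarith [le_abs_self θ])
        rw [abs_sub_le_iff]
        exact ⟨by linarith, by linarith⟩
      have hm : max (|x - x₀| - |θ|) 0 ≤ |y - x₀| := by
        apply max_le _ (abs_nonneg _)
        have : |x - x₀| ≤ |x - y| + |y - x₀| := abs_sub_le x y x₀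
        linarith
      have hm2 : (max (|x - x₀| - |θ|) 0) ^ 2 ≤ (y - x₀) ^ 2 := by
        rw [← sq_abs (y - x₀)]
        exact pow_le_pow_left₀ (le_max_right _ _) hm 2
      nlinarith [hb.le]
    set φ : ℝ → ℝ := fun t => ∫ y in x..(x + θ), g t y with hφ_def
    have hgtmeas : ∀ t : ℝ, Measurable (g t) := fun t => hgm.comp measurable_prodMk_left
    have hgint : ∀ t ∈ Icc t₀ T, IntervalIntegrable (g t) volume x (x + θ) := by
      intro t ht
      apply intervalIntegrable_iff.2
      apply Measure.integrableOn_of_bounded (measure_Ioc_lt_top).ne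
        (hgtmeas t).aestronglyMeasurable
      exact Filter.Eventually.of_forall fun y => by
        rw [Real.norm_eq_abs]; exact hgc t ht y
    have hFTC : ∀ t ∈ Icc t₀ T, φ t = G t (x + θ) - G t x := fun t ht =>
      integral_eq_sub_of_hasDerivAt (fun y _ => hderiv t ht y) (hgint t ht)
    have hφsm : StronglyMeasurable φ := by
      have hψ : StronglyMeasurable (fun t => ∫ y in Set.uIoc x (x + θ), g t y) :=
        StronglyMeasurable.integral_prod_right hgm.stronglyMeasurable
      have heq : φ = fun t => (if x ≤ x + θ then (1:ℝ) else -1) * ∫ y in Set.uIoc x (x + θ), g t y := by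
        funext t
        rw [hφ_def]
        simp only
        rw [intervalIntegral.intervalIntegral_eq_integral_uIoc, smul_eq_mul]
      rw [heq]
      exact hψ.const_mul _
    have hφbound : ∀ t ∈ Icc t₀ T, ‖φ t‖ ≤ c * W x * |θ| := by
      intro t ht
      have := intervalIntegral.norm_integral_le_of_norm_le_const (hKW t ht)
      simpa using this
    have hφint : IntervalIntegrable φ volume t₀ T := by
      apply intervalIntegrable_iff.2
      rw [Set.uIoc_of_le ht₀T.le]
      apply Measure.integrableOn_of_bounded (measure_Ioc_lt_top).ne
        hφsm.aestronglyMeasurable (M := c * W x * |θ|)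
      rw [ae_restrict_iff' measurableSet_Ioc]
      exact Filter.Eventually.of_forall fun t ht =>
        hφbound t ⟨ht.1.le, ht.2⟩
    by_cases hA : IntervalIntegrable (fun t => G t x) volume t₀ T
    · -- integrable case
      have heq : EqOn (fun t => G t x + φ t) (fun t => G t (x + θ)) (uIcc t₀ T) := by
        intro t ht
        rw [uIcc_of_le ht₀T.le] at ht
        have := hFTC t ht
        simp only
        linarith
      have hsplit : ∫ t in t₀..T, G t (x + θ)
          = (∫ t in t₀..T, G t x) + ∫ t in t₀..T, φ t := by
        rw [← intervalIntegral.integral_add hA hφint]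
        exact (intervalIntegral.integral_congr heq).symm
      have hdiff : f (x + θ) - f x = (1 / (T - t₀)) * ∫ t in t₀..T, φ t := by
        rw [hf, hf, hsplit]; ring
      rw [hdiff, abs_mul]
      have hTt : 0 < T - t₀ := by linarith
      have h1 : |1 / (T - t₀)| = 1 / (T - t₀) := abs_of_pos (by positivity)
      have h2 : ‖∫ t in t₀..T, φ t‖ ≤ c * W x * |θ| * |T - t₀| := by
        apply intervalIntegral.norm_integral_le_of_norm_le_const
        intro t ht
        rw [uIoc_of_le ht₀T.le] at ht
        exact hφbound t ⟨ht.1.le, ht.2⟩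
      rw [Real.norm_eq_abs] at h2
      rw [h1, abs_of_pos hTt] at *
      calc 1 / (T - t₀) * |∫ t in t₀..T, φ t|
          ≤ 1 / (T - t₀) * (c * W x * |θ| * (T - t₀)) := by
            apply mul_le_mul_of_nonneg_left h2 (by positivity)
        _ = |θ| * c * W x := by field_simp
    · -- non-integrable case: both integrals vanish
      have hGθn : ¬ IntervalIntegrable (fun t => G t (x + θ)) volume t₀ T := by
        intro h
        apply hA
        apply (intervalIntegrable_iff' enorm_ne_top).2
        apply IntegrableOn.congr_fun (f := fun t => G t (x + θ) - φ t)
          (((intervalIntegrable_iff' enorm_ne_top).1 (h.sub hφint))) _ measurableSet_uIcc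
        intro t ht
        rw [uIcc_of_le ht₀T.le] at ht
        have := hFTC t ht
        simp only
        linarith
      rw [hf, hf, intervalIntegral.integral_undef hA,
        intervalIntegral.integral_undef hGθn]
      simp only [mul_zero, sub_zero, abs_zero]
      positivity
  -- dominating integrable function
  set d₁ : ℝ := x₀ + |θ| with hd₁
  set d₂ : ℝ := x₀ - |θ| with hd₂
  set D : ℝ → ℝ := fun x => θ ^ 2 * c ^ 2 *
    ((Icc d₂ d₁).indicator (fun _ => (1:ℝ)) x
      + Real.exp (-b * (x - d₁) ^ 2) + Real.exp (-b * (x - d₂) ^ 2)) with hD_def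
  have hind_int : Integrable ((Icc d₂ d₁).indicator (fun _ => (1:ℝ))) := by
    rw [integrable_indicator_iff measurableSet_Icc]
    exact integrableOn_const measure_Icc_lt_top.ne
  have hg1_int : Integrable (fun x : ℝ => Real.exp (-b * (x - d₁) ^ 2)) :=
    (integrable_exp_neg_mul_sq hb).comp_sub_right d₁
  have hg2_int : Integrable (fun x : ℝ => Real.exp (-b * (x - d₂) ^ 2)) :=
    (integrable_exp_neg_mul_sq hb).comp_sub_right d₂
  have hD_int : Integrable D := by
    rw [hD_def]
    exact (((hind_int.add hg1_int).add hg2_int).const_mul _)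
  have hWsum : ∀ x : ℝ, W x ≤ (Icc d₂ d₁).indicator (fun _ => (1:ℝ)) x
      + Real.exp (-b * (x - d₁) ^ 2) + Real.exp (-b * (x - d₂) ^ 2) := by
    intro x
    have hind0 : 0 ≤ (Icc d₂ d₁).indicator (fun _ => (1:ℝ)) x :=
      Set.indicator_nonneg (fun _ _ => zero_le_one) x
    by_cases hcase : |x - x₀| ≤ |θ|
    · have hx : x ∈ Icc d₂ d₁ := by
        rcases abs_le.1 hcase with ⟨h1, h2⟩
        exact ⟨by rw [hd₂]; linarith, by rw [hd₁]; linarith⟩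
      rw [Set.indicator_of_mem hx]
      have := hW1 x
      have := Real.exp_pos (-b * (x - d₁) ^ 2)
      have := Real.exp_pos (-b * (x - d₂) ^ 2)
      linarith
    · push_neg at hcase
      have hmx : max (|x - x₀| - |θ|) 0 = |x - x₀| - |θ| :=
        max_eq_left (by linarith)
      by_cases hx : x₀ ≤ x
      · have habs : |x - x₀| = x - x₀ := abs_of_nonneg (by linarith)
        have hWeq : W x = Real.exp (-b * (x - d₁) ^ 2) := by
          rw [hW_def]
          simp only
          congr 1
          rw [hmx, habs, hd₁]
          ring
        rw [hWeq]
        have := Real.exp_pos (-b * (x - d₂) ^ 2)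
        linarith
      · push_neg at hx
        have habs : |x - x₀| = x₀ - x := by
          rw [abs_sub_comm]; exact abs_of_nonneg (by linarith)
        have hWeq : W x = Real.exp (-b * (x - d₂) ^ 2) := by
          rw [hW_def]
          simp only
          congr 1
          rw [hmx, habs, hd₂]
          ring
        rw [hWeq]
        have := Real.exp_pos (-b * (x - d₁) ^ 2)
        linarith
  -- compare the squared increment with D
  have hle : ∀ x : ℝ, (f (x + θ) - f x) ^ 2 ≤ D x := by
    intro x
    have h1 : |f (x + θ) - f x| ^ 2 ≤ (|θ| * c * W x) ^ 2 :=
      pow_le_pow_left₀ (abs_nonneg _) (hpt x) 2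
    rw [sq_abs] at h1
    have h2 : (|θ| * c * W x) ^ 2 = θ ^ 2 * c ^ 2 * (W x) ^ 2 := by
      rw [mul_pow, mul_pow, sq_abs]
    have h3 : (W x) ^ 2 ≤ W x := by nlinarith [hW0 x, hW1 x]
    have h4 : θ ^ 2 * c ^ 2 * (W x) ^ 2 ≤ θ ^ 2 * c ^ 2 * W x :=
      mul_le_mul_of_nonneg_left h3 (by positivity)
    have h5 : θ ^ 2 * c ^ 2 * W x ≤ D x := by
      rw [hD_def]
      exact mul_le_mul_of_nonneg_left (hWsum x) (by positivity)
    linarith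
  have hmono : (∫ x : ℝ, (f (x + θ) - f x) ^ 2) ≤ ∫ x : ℝ, D x :=
    integral_mono_of_nonneg (Filter.Eventually.of_forall fun x => sq_nonneg _)
      hD_int (Filter.Eventually.of_forall hle)
  -- compute the integral of D
  have hind_val : (∫ x : ℝ, (Icc d₂ d₁).indicator (fun _ => (1:ℝ)) x) = 2 * |θ| := by
    rw [MeasureTheory.integral_indicator_const _ measurableSet_Icc]
    rw [measureReal_def, Real.volume_Icc]
    rw [ENNReal.toReal_ofReal (by rw [hd₁, hd₂]; linarith [abs_nonneg θ])]
    rw [smul_eq_mul, mul_one, hd₁, hd₂]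
    ring
  have hg1_val : (∫ x : ℝ, Real.exp (-b * (x - d₁) ^ 2)) = s := by
    have := MeasureTheory.integral_sub_right_eq_self (μ := volume)
      (fun u : ℝ => Real.exp (-b * u ^ 2)) d₁
    rw [hs_def, ← integral_gaussian b]
    exact this
  have hg2_val : (∫ x : ℝ, Real.exp (-b * (x - d₂) ^ 2)) = s := by
    have := MeasureTheory.integral_sub_right_eq_self (μ := volume)
      (fun u : ℝ => Real.exp (-b * u ^ 2)) d₂
    rw [hs_def, ← integral_gaussian b]
    exact this
  have hD_val : (∫ x : ℝ, D x) = θ ^ 2 * c ^ 2 * (2 * |θ| + s + s) := by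
    have h12 : Integrable (fun x : ℝ =>
        (Icc d₂ d₁).indicator (fun _ => (1:ℝ)) x + Real.exp (-b * (x - d₁) ^ 2)) := by
      exact hind_int.add hg1_int
    rw [hD_def]
    simp only
    rw [MeasureTheory.integral_const_mul]
    rw [MeasureTheory.integral_add h12 hg2_int,
      MeasureTheory.integral_add hind_int hg1_int, hind_val, hg1_val, hg2_val]
  -- final numeric bound
  have hc2 : c ^ 2 = C ^ 2 / t₀ ^ (2 * q) := by
    rw [hc_def, div_pow]
    congr 1
    rw [sq, ← Real.rpow_add ht₀]
    norm_num [two_mul]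
  have habs3 : |θ| ^ 3 = |θ| * θ ^ 2 := by
    rw [pow_succ, sq_abs]; ring
  calc (∫ x : ℝ, (f (x + θ) - f x) ^ 2) ≤ ∫ x : ℝ, D x := hmono
    _ = θ ^ 2 * (C ^ 2 / t₀ ^ (2 * q)) * (2 * |θ| + s + s) := by rw [hD_val, hc2]
    _ = (C ^ 2 * (θ ^ 2 * (2 * |θ| + s + s))) / t₀ ^ (2 * q) := by ring
    _ ≤ (2 * C ^ 2 * (1 + s) * (θ ^ 2 + |θ| ^ 3)) / t₀ ^ (2 * q) := by
        rw [div_le_div_iff₀ hP hP]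
        have hnum : C ^ 2 * (θ ^ 2 * (2 * |θ| + s + s))
            ≤ 2 * C ^ 2 * (1 + s) * (θ ^ 2 + |θ| ^ 3) := by
          rw [habs3]
          nlinarith [habs3, hs, sq_nonneg θ, abs_nonneg θ, sq_nonneg C,
            mul_nonneg (sq_nonneg C) (sq_nonneg θ),
            mul_nonneg (mul_nonneg hs (sq_nonneg C))
              (mul_nonneg (abs_nonneg θ) (sq_nonneg θ))]
        exact mul_le_mul_of_nonneg_right hnum hP.le
    _ = 2 * C ^ 2 * (1 + s) / t₀ ^ (2 * q) * (θ ^ 2 + |θ| ^ 3) := by ring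
end

section
/- Let f : ℝ → ℝ be continuously differentiable with |f'(x)| ≤ C·exp(−M x²) for all x, where C, M > 0. Then for every θ ≥ 0: ∫ℝ (f(x+θ) − f(x))² dx ≤ θ² · [ 2C² ∫₀^∞ e^{−2Mx²} dx · 2 + C² θ ] , i.e. the squared L² increment is bounded by a constant times (θ² + θ³). -/
open MeasureTheory Real Set

/-- Key computational step in the proof of Corollary 1: for `f` continuously
differentiable with `|f'(x)| ≤ C exp(-M x²)` and `θ ≥ 0`, the squared L²
increment of `f` is bounded by `θ² (4 C² ∫₀^∞ e^{-2Mx²} dx + C² θ)`. -/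
theorem stmt_2 (C M : ℝ) (hC : 0 < C) (hM : 0 < M) (f f' : ℝ → ℝ)
    (hf : ∀ x : ℝ, HasDerivAt f (f' x) x) (hf'cont : Continuous f')
    (hbound : ∀ x : ℝ, |f' x| ≤ C * Real.exp (-M * x ^ 2)) :
    ∀ θ : ℝ, 0 ≤ θ →
      (∫ x : ℝ, (f (x + θ) - f x) ^ 2) ≤
        θ ^ 2 * (2 * C ^ 2 * (∫ x in Ioi (0 : ℝ), Real.exp (-2 * M * x ^ 2)) * 2
          + C ^ 2 * θ) := by
  intro θ hθ
  have h2M : (0:ℝ) < 2 * M := by linarith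
  -- integrability of the Gaussian
  have hint0 : Integrable (fun x : ℝ => Real.exp (-2 * M * x ^ 2)) := by
    have := integrable_exp_neg_mul_sq h2M
    simpa [neg_mul] using this
  have hint1 : Integrable (fun x : ℝ => Real.exp (-2 * M * (x + θ) ^ 2)) := by
    have := hint0.comp_add_right θ
    simpa using this
  have hint2 : Integrable ((Ioo (-θ) (0:ℝ)).indicator fun _ => (1:ℝ)) := by
    rw [integrable_indicator_iff measurableSet_Ioo]
    exact integrableOn_const measure_Ioo_lt_top.ne
  -- the dominating function
  set G : ℝ → ℝ := fun x => θ ^ 2 * C ^ 2 *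
      (Real.exp (-2 * M * x ^ 2) + Real.exp (-2 * M * (x + θ) ^ 2)
        + (Ioo (-θ) (0:ℝ)).indicator (fun _ => (1:ℝ)) x) with hG
  have hGint : Integrable G := (((hint0.add hint1).add hint2).const_mul _)
  -- pointwise bound
  have key : ∀ x : ℝ, (f (x + θ) - f x) ^ 2 ≤ G x := by
    intro x
    have hxle : x ≤ x + θ := by linarith
    have hftc : ∫ t in x..(x + θ), f' t = f (x + θ) - f x :=
      intervalIntegral.integral_eq_sub_of_hasDerivAt (fun t _ => hf t)
        (hf'cont.intervalIntegrable _ _)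
    have habs : ∀ K : ℝ, (∀ t ∈ Set.uIoc x (x + θ), |f' t| ≤ K) →
        (f (x + θ) - f x) ^ 2 ≤ K ^ 2 * θ ^ 2 := by
      intro K hK
      have := intervalIntegral.norm_integral_le_of_norm_le_const (a := x) (b := x + θ)
        (C := K) (f := f') (by simpa using hK)
      rw [hftc] at this
      have h1 : |f (x + θ) - f x| ≤ K * θ := by
        simpa [abs_of_nonneg hθ, Real.norm_eq_abs] using this
      calc (f (x + θ) - f x) ^ 2 = |f (x + θ) - f x| ^ 2 := (sq_abs _).symm
        _ ≤ (K * θ) ^ 2 := by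
            have h0 : (0:ℝ) ≤ |f (x + θ) - f x| := abs_nonneg _
            nlinarith
        _ = K ^ 2 * θ ^ 2 := by ring
    have hIoc : Set.uIoc x (x + θ) = Ioc x (x + θ) := uIoc_of_le hxle
    have hexp2 : ∀ a : ℝ, (C * Real.exp (-M * a ^ 2)) ^ 2
        = C ^ 2 * Real.exp (-2 * M * a ^ 2) := by
      intro a
      rw [mul_pow, ← Real.exp_nat_mul]
      ring_nf
    have hind_nonneg : 0 ≤ (Ioo (-θ) (0:ℝ)).indicator (fun _ => (1:ℝ)) x :=
      Set.indicator_nonneg (fun _ _ => zero_le_one) x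
    have hexp_nonneg : ∀ a : ℝ, (0:ℝ) ≤ Real.exp (-2 * M * a ^ 2) := fun a => (Real.exp_pos _).le
    rcases le_or_gt 0 x with hx | hx
    · -- x ≥ 0 : use decay at x
      have hb : ∀ t ∈ Set.uIoc x (x + θ), |f' t| ≤ C * Real.exp (-M * x ^ 2) := by
        intro t ht
        rw [hIoc] at ht
        refine (hbound t).trans
          (mul_le_mul_of_nonneg_left (Real.exp_le_exp.2 ?_) hC.le)
        have htt : x ^ 2 ≤ t ^ 2 := by nlinarith [ht.1.le, hx]
        nlinarith [mul_le_mul_of_nonneg_left htt hM.le]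
      have := habs _ hb
      rw [hexp2] at this
      refine this.trans ?_
      simp only [hG]
      have h9 : (0:ℝ) ≤ θ ^ 2 * C ^ 2 := by positivity
      nlinarith [mul_nonneg h9 (hexp_nonneg (x + θ)), mul_nonneg h9 hind_nonneg]
    · rcases le_or_gt (x + θ) 0 with hx2 | hx2
      · -- x + θ ≤ 0 : use decay at x + θ
        have hb : ∀ t ∈ Set.uIoc x (x + θ), |f' t| ≤ C * Real.exp (-M * (x + θ) ^ 2) := by
          intro t ht
          rw [hIoc] at ht
          refine (hbound t).trans
            (mul_le_mul_of_nonneg_left (Real.exp_le_exp.2 ?_) hC.le)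
          have htt : (x + θ) ^ 2 ≤ t ^ 2 := by nlinarith [ht.2, hx2]
          nlinarith [mul_le_mul_of_nonneg_left htt hM.le]
        have := habs _ hb
        rw [hexp2] at this
        refine this.trans ?_
        simp only [hG]
        have h9 : (0:ℝ) ≤ θ ^ 2 * C ^ 2 := by positivity
        nlinarith [mul_nonneg h9 (hexp_nonneg x), mul_nonneg h9 hind_nonneg]
      · -- middle : bound by C
        have hb : ∀ t ∈ Set.uIoc x (x + θ), |f' t| ≤ C := by
          intro t ht
          have h1 : Real.exp (-M * t ^ 2) ≤ 1 :=
            Real.exp_le_one_iff.2 (by nlinarith [sq_nonneg t, hM.le])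
          have := mul_le_mul_of_nonneg_left h1 hC.le
          refine (hbound t).trans ?_
          linarith
        have := habs _ hb
        refine this.trans ?_
        have hxmem : x ∈ Ioo (-θ) (0:ℝ) := ⟨by linarith, hx⟩
        simp only [hG, Set.indicator_of_mem hxmem]
        have h9 : (0:ℝ) ≤ θ ^ 2 * C ^ 2 := by positivity
        nlinarith [mul_nonneg h9 (hexp_nonneg x), mul_nonneg h9 (hexp_nonneg (x + θ))]
  -- conclude
  have hmono : (∫ x : ℝ, (f (x + θ) - f x) ^ 2) ≤ ∫ x, G x :=
    integral_mono_of_nonneg (Filter.Eventually.of_forall fun x => sq_nonneg _) hGint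
      (Filter.Eventually.of_forall key)
  refine hmono.trans ?_
  -- compute ∫ G
  have hIeq : (∫ x : ℝ, Real.exp (-2 * M * x ^ 2))
      = 2 * ∫ x in Ioi (0:ℝ), Real.exp (-2 * M * x ^ 2) := by
    have := integral_comp_abs (f := fun y : ℝ => Real.exp (-2 * M * y ^ 2))
    simpa [sq_abs] using this
  have hshift : (∫ x : ℝ, Real.exp (-2 * M * (x + θ) ^ 2))
      = ∫ x : ℝ, Real.exp (-2 * M * x ^ 2) := by
    exact integral_add_right_eq_self (fun y : ℝ => Real.exp (-2 * M * y ^ 2)) θ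
  have hindint : (∫ x : ℝ, (Ioo (-θ) (0:ℝ)).indicator (fun _ => (1:ℝ)) x) = θ := by
    rw [integral_indicator measurableSet_Ioo]
    simp [Real.volume_Ioo, ENNReal.toReal_ofReal, hθ]
  have h1 : Integrable (fun x : ℝ => Real.exp (-2 * M * x ^ 2)
      + Real.exp (-2 * M * (x + θ) ^ 2)) := hint0.add hint1
  simp only [hG]
  rw [integral_const_mul, integral_add h1 hint2, integral_add hint0 hint1,
    hshift, hIeq, hindint]
  exact le_of_eq (by ring)
end

section
/- Let K be a symmetric kernel in L¹(ℝ) with ∫K = 1 and ∫|z|(1+|z|^{1/2})K(z)dz < ∞, and let f : ℝ → ℝ be a square-integrable function satisfying the Nikol'skii condition ∫ℝ(f(x+θ)−f(x))²dx ≤ c(θ²+|θ|³) for all θ ∈ ℝ. Then for every h ∈ (0,1], the convolution bias satisfies ∫ℝ (∫ℝ K(z)(f(hz+x) − f(x)) dz)² dx ≤ c·(∫ℝ |z|(1+|z|^{1/2})K(z)dz)² · h². -/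
open MeasureTheory Real Set

lemma qmp_affine (h x : ℝ) (hh : h ≠ 0) :
    Measure.QuasiMeasurePreserving (fun z : ℝ => h * z + x) volume volume := by
  have h1 : Measure.QuasiMeasurePreserving (fun z : ℝ => h * z) volume volume := by
    refine ⟨(measurable_const_mul h), ?_⟩
    rw [Real.map_volume_mul_left hh]
    exact MeasureTheory.Measure.smul_absolutelyContinuous
  have h2 : Measure.QuasiMeasurePreserving (fun z : ℝ => z + x) volume volume :=
    (measurePreserving_add_right volume x).quasiMeasurePreserving
  exact h2.comp h1

lemma elem_bound (c h z : ℝ) (hc : 0 < c) (h0 : 0 < h) (h1 : h ≤ 1) :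
    c * ((h * z) ^ 2 + |h * z| ^ 3) ≤ c * h ^ 2 * (|z| * (1 + |z| ^ ((1:ℝ)/2))) ^ 2 := by
  have hs : 0 ≤ |z| ^ ((1:ℝ)/2) := Real.rpow_nonneg (abs_nonneg z) _
  have hs2 : (|z| ^ ((1:ℝ)/2)) ^ 2 = |z| := by
    rw [← Real.rpow_natCast (|z| ^ ((1:ℝ)/2)) 2, ← Real.rpow_mul (abs_nonneg z)]
    norm_num
  have habs : |h * z| = h * |z| := by
    rw [abs_mul, abs_of_pos h0]
  have hz : 0 ≤ |z| := abs_nonneg z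
  have h3 : h ^ 3 ≤ h ^ 2 := by nlinarith
  have key : (h * z) ^ 2 + |h * z| ^ 3 ≤ h ^ 2 * (|z| * (1 + |z| ^ ((1:ℝ)/2))) ^ 2 := by
    rw [habs]
    have hzz : z ^ 2 = |z| ^ 2 := (sq_abs z).symm
    nlinarith [sq_nonneg (h * |z|), mul_nonneg (mul_nonneg (pow_nonneg h0.le 2) (sq_nonneg |z|)) hs,
      sq_nonneg (|z| ^ ((1:ℝ)/2)), pow_nonneg hz 3, mul_pos h0 h0]
  calc c * ((h * z) ^ 2 + |h * z| ^ 3) ≤ c * (h ^ 2 * (|z| * (1 + |z| ^ ((1:ℝ)/2))) ^ 2) :=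
        mul_le_mul_of_nonneg_left key hc.le
    _ = c * h ^ 2 * (|z| * (1 + |z| ^ ((1:ℝ)/2))) ^ 2 := by ring

lemma ennreal_helper (a b Y : ENNReal) (hb0 : b ≠ 0) (hbt : b ≠ ⊤) :
    a / b * (Y * b) = Y * a := by
  rw [mul_comm (a / b) (Y * b), mul_assoc, mul_comm b (a / b),
    ENNReal.div_mul_cancel hb0 hbt]

lemma key (K : ℝ → ℝ) (hK0 : ∀ z, 0 ≤ K z) (hKm : Measurable K)
    (hKmom : Integrable fun z : ℝ => |z| * (1 + |z| ^ ((1 : ℝ) / 2)) * K z)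
    (f : ℝ → ℝ) (hfm : StronglyMeasurable f) (hf : MemLp f 2 volume)
    (c : ℝ) (hc : 0 < c)
    (hNik : ∀ θ : ℝ, (∫ x : ℝ, (f (x + θ) - f x) ^ 2) ≤ c * (θ ^ 2 + |θ| ^ 3))
    (h : ℝ) (h0 : 0 < h) (h1 : h ≤ 1) :
    (∫ x : ℝ, (∫ z : ℝ, K z * (f (h * z + x) - f x)) ^ 2) ≤
      c * (∫ z : ℝ, |z| * (1 + |z| ^ ((1 : ℝ) / 2)) * K z) ^ 2 * h ^ 2 := by
  set w : ℝ → ℝ := fun z => |z| * (1 + |z| ^ ((1 : ℝ) / 2)) with hw_def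
  have hw0 : ∀ z, 0 ≤ w z := fun z =>
    mul_nonneg (abs_nonneg z) (by positivity)
  have hwc : Continuous w :=
    continuous_abs.mul (continuous_const.add
      ((Real.continuous_rpow_const (by norm_num)).comp continuous_abs))
  have hwm : Measurable w := hwc.measurable
  have hwpos : ∀ z : ℝ, z ≠ 0 → 0 < w z := by
    intro z hz
    have : (0:ℝ) < |z| := abs_pos.mpr hz
    have h2 : (0:ℝ) < 1 + |z| ^ ((1:ℝ)/2) := by positivity
    exact mul_pos this h2
  set g : ℝ → ℝ → ℝ := fun z x => f (h * z + x) - f x with hg_def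
  have hg0 : ∀ x, g 0 x = 0 := by intro x; simp [hg_def]
  have hgm : Measurable (Function.uncurry fun x z => g z x) := by
    have : Measurable fun p : ℝ × ℝ => f (h * p.2 + p.1) :=
      hfm.measurable.comp ((measurable_snd.const_mul h).add measurable_fst)
    exact this.sub (hfm.measurable.comp measurable_fst)
  have hgmz : ∀ x, Measurable fun z => g z x := by
    intro x
    exact (hfm.measurable.comp ((measurable_const_mul h).add measurable_const)).sub
      measurable_const
  have hgmx : ∀ z, Measurable fun x => g z x := fun z =>
    (hfm.measurable.comp (measurable_id.const_add (h * z))).sub hfm.measurable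
  set A : ℝ := ∫ z : ℝ, |z| * (1 + |z| ^ ((1 : ℝ) / 2)) * K z with hA_def
  have hA0 : 0 ≤ A := integral_nonneg fun z => mul_nonneg (hw0 z) (hK0 z)
  have hA' : (∫⁻ z : ℝ, ENNReal.ofReal (w z * K z)) = ENNReal.ofReal A := by
    rw [hA_def, MeasureTheory.ofReal_integral_eq_lintegral_ofReal hKmom
      (Filter.Eventually.of_forall fun z => mul_nonneg (hw0 z) (hK0 z))]
  -- integrability of x ↦ (g z x)^2 and the Nikol'skii bound on its integral
  have hmemg : ∀ z : ℝ, MemLp (fun x => g z x) 2 volume := by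
    intro z
    have ht : MemLp (fun x : ℝ => f (h * z + x)) 2 volume := by
      have : (fun x : ℝ => f (h * z + x)) = f ∘ fun x : ℝ => x + h * z := by
        funext x; simp [add_comm]
      rw [this]
      exact hf.comp_measurePreserving (measurePreserving_add_right volume (h * z))
    exact ht.sub hf
  have hgsq_int : ∀ z : ℝ, Integrable (fun x => (g z x) ^ 2) volume := fun z =>
    (hmemg z).integrable_sq
  have hgsq_bound : ∀ z : ℝ, (∫ x : ℝ, (g z x) ^ 2) ≤ c * h ^ 2 * (w z) ^ 2 := by
    intro z
    have e1 : (∫ x : ℝ, (g z x) ^ 2) = ∫ x : ℝ, (f (x + h * z) - f x) ^ 2 := by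
      apply integral_congr_ae
      filter_upwards with x
      rw [hg_def]; ring_nf
    rw [e1]
    exact (hNik (h * z)).trans (elem_bound c h z hc h0 h1)
  have hglint : ∀ z : ℝ, (∫⁻ x : ℝ, ENNReal.ofReal ((g z x) ^ 2)) ≤
      ENNReal.ofReal (c * h ^ 2 * (w z) ^ 2) := by
    intro z
    rw [← MeasureTheory.ofReal_integral_eq_lintegral_ofReal (hgsq_int z)
      (Filter.Eventually.of_forall fun x => sq_nonneg _)]
    exact ENNReal.ofReal_le_ofReal (hgsq_bound z)
  -- the ENNReal framework
  set L : ℝ → ENNReal := fun x => ∫⁻ z : ℝ, ENNReal.ofReal (K z) * ENNReal.ofReal |g z x|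
    with hL_def
  set B : ℝ → ENNReal := fun x =>
    ∫⁻ z : ℝ, ENNReal.ofReal (K z) * ENNReal.ofReal ((g z x) ^ 2) / ENNReal.ofReal (w z)
    with hB_def
  have hBm : ∀ x, Measurable fun z =>
      ENNReal.ofReal (K z) * ENNReal.ofReal ((g z x) ^ 2) / ENNReal.ofReal (w z) := by
    intro x
    exact ((ENNReal.measurable_ofReal.comp hKm).mul
      (ENNReal.measurable_ofReal.comp ((hgmz x).pow_const 2))).div
      (ENNReal.measurable_ofReal.comp hwm)
  have hCS : ∀ x : ℝ, L x ≤ ENNReal.ofReal A ^ ((1:ℝ)/2) * (B x) ^ ((1:ℝ)/2) := by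
    intro x
    set φ : ℝ → ENNReal := fun z => ENNReal.ofReal (w z * K z) ^ ((1:ℝ)/2) with hφ_def
    set ψ : ℝ → ENNReal := fun z =>
      (ENNReal.ofReal (K z) * ENNReal.ofReal ((g z x) ^ 2) / ENNReal.ofReal (w z)) ^ ((1:ℝ)/2)
      with hψ_def
    have hφm : Measurable φ :=
      (ENNReal.measurable_ofReal.comp (hwm.mul hKm)).pow measurable_const
    have hψm : Measurable ψ := (hBm x).pow measurable_const
    have hmul : ∀ z, ENNReal.ofReal (K z) * ENNReal.ofReal |g z x| = (φ * ψ) z := by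
      intro z
      by_cases hz : z = 0
      · subst hz
        have hw00 : w 0 = 0 := by simp [hw_def]
        simp [hφ_def, hg0, hw00, ENNReal.zero_rpow_of_pos, Pi.mul_apply]
      · have hb0 : ENNReal.ofReal (w z) ≠ 0 := by
          simp only [ne_eq, ENNReal.ofReal_eq_zero, not_le]
          exact hwpos z hz
        have hbt : ENNReal.ofReal (w z) ≠ ⊤ := ENNReal.ofReal_ne_top
        have habsg : ENNReal.ofReal ((g z x) ^ 2) = ENNReal.ofReal |g z x| ^ 2 := by
          rw [← ENNReal.ofReal_pow (abs_nonneg _), sq_abs]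
        have hprod : ENNReal.ofReal (w z * K z) *
            (ENNReal.ofReal (K z) * ENNReal.ofReal ((g z x) ^ 2) / ENNReal.ofReal (w z)) =
            (ENNReal.ofReal (K z) * ENNReal.ofReal |g z x|) ^ 2 := by
          rw [habsg, ENNReal.ofReal_mul (hw0 z), mul_assoc, mul_left_comm,
            ENNReal.mul_div_cancel hb0 hbt]
          ring
        show _ = φ z * ψ z
        rw [hφ_def, hψ_def]
        rw [← ENNReal.mul_rpow_of_nonneg _ _ (by norm_num : (0:ℝ) ≤ 1/2), hprod,
          ← ENNReal.rpow_natCast _ 2, ← ENNReal.rpow_mul]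
        norm_num
    have hconj : Real.HolderConjugate 2 2 := ⟨by norm_num, by norm_num, by norm_num⟩
    have hHolder := ENNReal.lintegral_mul_le_Lp_mul_Lq volume hconj
      hφm.aemeasurable hψm.aemeasurable
    have hrw1 : ∀ z, φ z ^ (2:ℝ) = ENNReal.ofReal (w z * K z) := by
      intro z; rw [hφ_def, ← ENNReal.rpow_mul]; norm_num
    have hrw2 : ∀ z, ψ z ^ (2:ℝ) =
        ENNReal.ofReal (K z) * ENNReal.ofReal ((g z x) ^ 2) / ENNReal.ofReal (w z) := by
      intro z; rw [hψ_def, ← ENNReal.rpow_mul]; norm_num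
    calc L x = ∫⁻ z : ℝ, (φ * ψ) z := by
          rw [hL_def]; exact lintegral_congr hmul
      _ ≤ (∫⁻ z : ℝ, φ z ^ (2:ℝ)) ^ ((1:ℝ)/2) * (∫⁻ z : ℝ, ψ z ^ (2:ℝ)) ^ ((1:ℝ)/2) := hHolder
      _ = ENNReal.ofReal A ^ ((1:ℝ)/2) * (B x) ^ ((1:ℝ)/2) := by
          rw [lintegral_congr hrw1, lintegral_congr hrw2, hA', hB_def]
  have hLsq : ∀ x, L x ^ 2 ≤ ENNReal.ofReal A * B x := by
    intro x
    calc L x ^ 2 ≤ (ENNReal.ofReal A ^ ((1:ℝ)/2) * B x ^ ((1:ℝ)/2)) ^ 2 := by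
          rw [pow_two, pow_two]; exact mul_le_mul' (hCS x) (hCS x)
      _ = ENNReal.ofReal A * B x := by
          rw [mul_pow, ← ENNReal.rpow_natCast (ENNReal.ofReal A ^ ((1:ℝ)/2)) 2,
            ← ENNReal.rpow_natCast (B x ^ ((1:ℝ)/2)) 2, ← ENNReal.rpow_mul,
            ← ENNReal.rpow_mul]
          norm_num
  have hinner : ∀ z : ℝ, (∫⁻ x : ℝ,
      ENNReal.ofReal (K z) * ENNReal.ofReal ((g z x) ^ 2) / ENNReal.ofReal (w z)) ≤
      ENNReal.ofReal (c * h ^ 2) * ENNReal.ofReal (w z * K z) := by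
    intro z
    have e0 : ∀ x : ℝ, ENNReal.ofReal (K z) * ENNReal.ofReal ((g z x) ^ 2) / ENNReal.ofReal (w z)
        = (ENNReal.ofReal (K z) / ENNReal.ofReal (w z)) * ENNReal.ofReal ((g z x) ^ 2) := by
      intro x; rw [div_eq_mul_inv, div_eq_mul_inv]; ring
    rw [lintegral_congr e0, lintegral_const_mul _ ((hgmx z).pow_const 2).ennreal_ofReal]
    calc (ENNReal.ofReal (K z) / ENNReal.ofReal (w z)) * ∫⁻ x, ENNReal.ofReal ((g z x) ^ 2)
        ≤ (ENNReal.ofReal (K z) / ENNReal.ofReal (w z)) *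
          ENNReal.ofReal (c * h ^ 2 * (w z) ^ 2) := mul_le_mul_right (hglint z) _
      _ ≤ ENNReal.ofReal (c * h ^ 2) * ENNReal.ofReal (w z * K z) := by
          by_cases hz : z = 0
          · have hw00 : w 0 = 0 := by simp [hw_def]
            subst hz
            rw [hw00]
            norm_num
          · have hb0 : ENNReal.ofReal (w z) ≠ 0 := by
              simp only [ne_eq, ENNReal.ofReal_eq_zero, not_le]
              exact hwpos z hz
            have hbt : ENNReal.ofReal (w z) ≠ ⊤ := ENNReal.ofReal_ne_top
            have e1 : c * h ^ 2 * (w z) ^ 2 = (c * h ^ 2 * w z) * w z := by ring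
            have hY : 0 ≤ c * h ^ 2 * w z := by positivity
            rw [e1, ENNReal.ofReal_mul hY, ennreal_helper _ _ _ hb0 hbt,
              ← ENNReal.ofReal_mul hY, ← ENNReal.ofReal_mul (by positivity : 0 ≤ c * h ^ 2)]
            exact ENNReal.ofReal_le_ofReal (le_of_eq (by ring))
  have hBint : (∫⁻ x : ℝ, B x) ≤ ENNReal.ofReal (c * h ^ 2) * ENNReal.ofReal A := by
    have hjm : Measurable fun p : ℝ × ℝ =>
        ENNReal.ofReal (K p.2) * ENNReal.ofReal ((g p.2 p.1) ^ 2) / ENNReal.ofReal (w p.2) := by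
      exact ((ENNReal.measurable_ofReal.comp (hKm.comp measurable_snd)).mul
        (ENNReal.measurable_ofReal.comp (hgm.pow_const 2))).div
        (ENNReal.measurable_ofReal.comp (hwm.comp measurable_snd))
    have hswap : (∫⁻ x : ℝ, B x) = ∫⁻ z : ℝ, ∫⁻ x : ℝ,
        ENNReal.ofReal (K z) * ENNReal.ofReal ((g z x) ^ 2) / ENNReal.ofReal (w z) := by
      rw [hB_def]
      exact lintegral_lintegral_swap hjm.aemeasurable
    rw [hswap]
    calc (∫⁻ z : ℝ, ∫⁻ x : ℝ,
        ENNReal.ofReal (K z) * ENNReal.ofReal ((g z x) ^ 2) / ENNReal.ofReal (w z))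
        ≤ ∫⁻ z : ℝ, ENNReal.ofReal (c * h ^ 2) * ENNReal.ofReal (w z * K z) :=
          lintegral_mono hinner
      _ = ENNReal.ofReal (c * h ^ 2) * ∫⁻ z : ℝ, ENNReal.ofReal (w z * K z) :=
          lintegral_const_mul _ (ENNReal.measurable_ofReal.comp (hwm.mul hKm))
      _ = ENNReal.ofReal (c * h ^ 2) * ENNReal.ofReal A := by rw [hA']
  have hmain : (∫⁻ x : ℝ, L x ^ 2) ≤ ENNReal.ofReal (c * A ^ 2 * h ^ 2) := by
    calc (∫⁻ x : ℝ, L x ^ 2) ≤ ∫⁻ x : ℝ, ENNReal.ofReal A * B x := lintegral_mono hLsq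
      _ = ENNReal.ofReal A * ∫⁻ x : ℝ, B x := lintegral_const_mul' _ _ ENNReal.ofReal_ne_top
      _ ≤ ENNReal.ofReal A * (ENNReal.ofReal (c * h ^ 2) * ENNReal.ofReal A) :=
          mul_le_mul_right hBint _
      _ = ENNReal.ofReal (c * A ^ 2 * h ^ 2) := by
          rw [← ENNReal.ofReal_mul (by positivity : (0:ℝ) ≤ c * h ^ 2),
            ← ENNReal.ofReal_mul hA0]
          congr 1
          ring
  -- pointwise comparison of the squared integral with L x ^ 2
  have hpt : ∀ x : ℝ, ENNReal.ofReal ((∫ z : ℝ, K z * (f (h * z + x) - f x)) ^ 2) ≤ L x ^ 2 := by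
    intro x
    by_cases hLtop : L x = ⊤
    · rw [hLtop]
      simp [pow_two]
    · have h1 : |∫ z : ℝ, K z * (f (h * z + x) - f x)| ≤ (L x).toReal := by
        have hn := MeasureTheory.norm_integral_le_lintegral_norm
          (μ := volume) (fun z => K z * (f (h * z + x) - f x))
        have heq : (∫⁻ z : ℝ, ENNReal.ofReal ‖K z * (f (h * z + x) - f x)‖) = L x := by
          rw [hL_def]
          apply lintegral_congr
          intro z
          rw [Real.norm_eq_abs, abs_mul, abs_of_nonneg (hK0 z), ENNReal.ofReal_mul (hK0 z)]
        rw [heq] at hn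
        simpa [Real.norm_eq_abs] using hn
      have h2 : (∫ z : ℝ, K z * (f (h * z + x) - f x)) ^ 2 ≤ (L x).toReal ^ 2 := by
        rw [← sq_abs]
        exact pow_le_pow_left₀ (abs_nonneg _) h1 2
      calc ENNReal.ofReal ((∫ z : ℝ, K z * (f (h * z + x) - f x)) ^ 2)
          ≤ ENNReal.ofReal ((L x).toReal ^ 2) := ENNReal.ofReal_le_ofReal h2
        _ = ENNReal.ofReal ((L x).toReal) ^ 2 := ENNReal.ofReal_pow ENNReal.toReal_nonneg 2
        _ = L x ^ 2 := by rw [ENNReal.ofReal_toReal hLtop]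
  -- conclusion
  have hFmeas : AEStronglyMeasurable
      (fun x : ℝ => (∫ z : ℝ, K z * (f (h * z + x) - f x)) ^ 2) volume := by
    have hj : StronglyMeasurable fun p : ℝ × ℝ => K p.2 * (f (h * p.2 + p.1) - f p.1) :=
      ((hKm.comp measurable_snd).mul hgm).stronglyMeasurable
    have := MeasureTheory.StronglyMeasurable.integral_prod_right' (ν := volume) hj
    exact ((this.measurable.pow_const 2).stronglyMeasurable).aestronglyMeasurable
  rw [integral_eq_lintegral_of_nonneg_ae
    (Filter.Eventually.of_forall fun x => sq_nonneg _) hFmeas]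
  apply ENNReal.toReal_le_of_le_ofReal (by positivity)
  calc (∫⁻ x : ℝ, ENNReal.ofReal ((∫ z : ℝ, K z * (f (h * z + x) - f x)) ^ 2))
      ≤ ∫⁻ x : ℝ, L x ^ 2 := lintegral_mono hpt
    _ ≤ ENNReal.ofReal (c * A ^ 2 * h ^ 2) := hmain


/-- Bias bound in Proposition 1 for `β = 1`: for a symmetric nonnegative kernel
with unit mass and a square-integrable `f` satisfying the Nikol'skii condition,
the integrated squared convolution bias is at most
`c (∫ |z|(1+|z|^{1/2}) K(z) dz)² h²` for all `h ∈ (0,1]`. -/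
theorem stmt_4 (K : ℝ → ℝ) (hK0 : ∀ z, 0 ≤ K z) (hKsym : ∀ z, K (-z) = K z)
    (hKint : Integrable K) (hKmass : (∫ z : ℝ, K z) = 1)
    (hKmom : Integrable fun z : ℝ => |z| * (1 + |z| ^ ((1 : ℝ) / 2)) * K z)
    (f : ℝ → ℝ) (hf : MemLp f 2 volume) (c : ℝ) (hc : 0 < c)
    (hNik : ∀ θ : ℝ, (∫ x : ℝ, (f (x + θ) - f x) ^ 2) ≤ c * (θ ^ 2 + |θ| ^ 3)) :
    ∀ h : ℝ, h ∈ Ioc (0 : ℝ) 1 →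
      (∫ x : ℝ, (∫ z : ℝ, K z * (f (h * z + x) - f x)) ^ 2) ≤
        c * (∫ z : ℝ, |z| * (1 + |z| ^ ((1 : ℝ) / 2)) * K z) ^ 2 * h ^ 2 := by
  intro h hh
  obtain ⟨h0, h1⟩ := hh
  -- measurable versions of f and K
  set f' : ℝ → ℝ := hf.1.mk f with hf'_def
  have hf'm : StronglyMeasurable f' := hf.1.stronglyMeasurable_mk
  have hff' : f =ᵐ[volume] f' := hf.1.ae_eq_mk
  set K' : ℝ → ℝ := fun z => max (hKint.1.mk K z) 0 with hK'_def
  have hK'm : Measurable K' :=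
    (hKint.1.stronglyMeasurable_mk.measurable.max measurable_const)
  have hKK' : K =ᵐ[volume] K' := by
    filter_upwards [hKint.1.ae_eq_mk] with z hz
    rw [hK'_def]
    simp only [← hz]
    exact (max_eq_left (hK0 z)).symm
  have hK'0 : ∀ z, 0 ≤ K' z := fun z => le_max_right _ _
  -- a measurable null superset of the set where f ≠ f'
  have hnull : volume {x : ℝ | f x ≠ f' x} = 0 := ae_iff.mp hff'
  obtain ⟨N, hNsub, hNmeas, hNnull⟩ :=
    exists_measurable_superset_of_null hnull
  have htrans : ∀ a : ℝ, a ≠ 0 → ∀ b : ℝ, ∀ᵐ z : ℝ, f (a * z + b) = f' (a * z + b) := by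
    intro a ha b
    have hpre : volume ((fun z : ℝ => a * z + b) ⁻¹' N) = 0 :=
      (qmp_affine a b ha).preimage_null hNnull
    rw [← MeasureTheory.compl_mem_ae_iff] at hpre
    filter_upwards [hpre] with z hz
    by_contra hne
    exact hz (hNsub hne)
  have htrans' : ∀ θ : ℝ, ∀ᵐ x : ℝ, f (x + θ) = f' (x + θ) := by
    intro θ
    have hpre : volume ((fun x : ℝ => x + θ) ⁻¹' N) = 0 :=
      (measurePreserving_add_right volume θ).quasiMeasurePreserving.preimage_null hNnull
    rw [← MeasureTheory.compl_mem_ae_iff] at hpre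
    filter_upwards [hpre] with x hx
    by_contra hne
    exact hx (hNsub hne)
  have hNik' : ∀ θ : ℝ, (∫ x : ℝ, (f' (x + θ) - f' x) ^ 2) ≤ c * (θ ^ 2 + |θ| ^ 3) := by
    intro θ
    have e : (∫ x : ℝ, (f' (x + θ) - f' x) ^ 2) = ∫ x : ℝ, (f (x + θ) - f x) ^ 2 := by
      apply integral_congr_ae
      filter_upwards [hff', htrans' θ] with x h1 h2
      rw [h1, h2]
    rw [e]
    exact hNik θ
  have hf' : MemLp f' 2 volume := hf.ae_eq hff'
  have hKmom' : Integrable (fun z : ℝ => |z| * (1 + |z| ^ ((1 : ℝ) / 2)) * K' z) volume := by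
    apply hKmom.congr
    filter_upwards [hKK'] with z hz
    rw [hz]
  have main := key K' hK'0 hK'm hKmom' f' hf'm hf' c hc hNik' h h0 h1
  have eA : (∫ z : ℝ, |z| * (1 + |z| ^ ((1 : ℝ) / 2)) * K z) =
      ∫ z : ℝ, |z| * (1 + |z| ^ ((1 : ℝ) / 2)) * K' z := by
    apply integral_congr_ae
    filter_upwards [hKK'] with z hz
    rw [hz]
  have eI : (∫ x : ℝ, (∫ z : ℝ, K z * (f (h * z + x) - f x)) ^ 2) =
      ∫ x : ℝ, (∫ z : ℝ, K' z * (f' (h * z + x) - f' x)) ^ 2 := by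
    apply integral_congr_ae
    filter_upwards [hff'] with x hx
    congr 1
    apply integral_congr_ae
    filter_upwards [htrans h h0.ne' x, hKK'] with z hz1 hz2
    rw [hz1, hz2, hx]
  rw [eI, eA]
  exact main
end

section
/- Let p : [t₀,T] × ℝ → ℝ be continuously differentiable in t with |∂_t p(t,x)| ≤ (c₃/t₀^{q₃}) exp(−m₃(x−x₀)²/T) for t ∈ [t₀,T], and let K ∈ L¹(ℝ) be a nonnegative kernel with ∫K = 1. For the uniform grid t_j = t₀ + j(T−t₀)/n, define the discretization bias D_n(x) = (1/(T−t₀)) Σ_{j=0}^{n−1} ∫_{t_j}^{t_{j+1}} ∫ℝ K_h(z−x)(p(t,z) − p(t_j,z)) dz dt. Then ∫ℝ D_n(x)² dx ≤ C / (n² t₀^{2q₃}), with C depending only on c₃, m₃, T, x₀ (not on h, n, t₀). -/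
open MeasureTheory Real Set intervalIntegral

set_option maxHeartbeats 2000000 in
/-- Discretization bias estimate of Proposition 4: if `|∂ₜ p(t,x)| ≤
(c₃/t₀^{q₃}) exp(-m₃(x-x₀)²/T)` on `[t₀,T]`, then the squared L² norm of the
discretization bias `D_n` is at most `C/(n² t₀^{2q₃})`, with `C` depending only
on `c₃, m₃, T, x₀`. -/
theorem stmt_12 (c₃ m₃ q₃ T x₀ : ℝ) (hc₃ : 0 < c₃) (hm₃ : 0 < m₃) (hq₃ : 0 < q₃)
    (hT : 0 < T) :
    ∃ C > 0, ∀ (t₀ : ℝ), 0 < t₀ → t₀ < T →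
      ∀ (n : ℕ), 0 < n →
      ∀ (h : ℝ), 0 < h →
      ∀ (p p' : ℝ → ℝ → ℝ),
        (∀ x : ℝ, ∀ t ∈ Icc t₀ T, HasDerivAt (fun τ => p τ x) (p' t x) t) →
        (∀ t ∈ Icc t₀ T, ∀ x : ℝ,
          |p' t x| ≤ c₃ / t₀ ^ q₃ * Real.exp (-m₃ * (x - x₀) ^ 2 / T)) →
      ∀ K : ℝ → ℝ, (∀ z, 0 ≤ K z) → Integrable K → (∫ z : ℝ, K z) = 1 →
        (∫ x : ℝ,
          ((1 / (T - t₀)) * ∑ j ∈ Finset.range n,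
            ∫ t in (t₀ + j * (T - t₀) / n)..(t₀ + (j + 1) * (T - t₀) / n),
              ∫ z : ℝ, (K ((z - x) / h) / h) *
                (p t z - p (t₀ + j * (T - t₀) / n) z)) ^ 2)
        ≤ C / (n ^ 2 * t₀ ^ (2 * q₃)) := by
  have hb : 0 < m₃ / T := div_pos hm₃ hT
  set S : ℝ := Real.sqrt (π / (m₃ / T)) with hS
  have hSpos : 0 < S := Real.sqrt_pos.2 (div_pos Real.pi_pos hb)
  refine ⟨T ^ 2 * c₃ ^ 2 * S, by positivity, ?_⟩
  intro t₀ ht₀ ht₀T n hn h hh p p' hderiv hbound K hK0 hKint hKone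
  have hTt : 0 < T - t₀ := sub_pos.2 ht₀T
  have hnR : (0 : ℝ) < n := by exact_mod_cast hn
  -- the Gaussian envelope
  set e : ℝ → ℝ := fun z => Real.exp (-(m₃ / T) * (z - x₀) ^ 2) with he_def
  have he_eq : ∀ z : ℝ, Real.exp (-m₃ * (z - x₀) ^ 2 / T) = e z := by
    intro z; simp only [he_def]; ring_nf
  have he_pos : ∀ z, 0 < e z := fun z => Real.exp_pos _
  have he_le_one : ∀ z, e z ≤ 1 := by
    intro z
    apply Real.exp_le_one_iff.2
    have : 0 ≤ (m₃ / T) * (z - x₀) ^ 2 := by positivity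
    linarith
  have he_cont : Continuous e :=
    Real.continuous_exp.comp
      ((continuous_const.mul ((continuous_id.sub continuous_const).pow 2)))
  have heInt : Integrable e := by
    rw [he_def]
    have := (integrable_exp_neg_mul_sq hb).comp_sub_right x₀
    apply this.congr
    filter_upwards with z using by ring_nf
  have heVal : ∫ z, e z = S := by
    have := integral_sub_right_eq_self (μ := volume)
      (fun y => Real.exp (-(m₃ / T) * y ^ 2)) x₀
    simp only [he_def]
    rw [this, integral_gaussian]
  -- a measurable modification of K
  set K₁ : ℝ → ℝ := fun z => max (hKint.1.mk K z) 0 with hK₁_def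
  have hK₁meas : StronglyMeasurable K₁ :=
    ((hKint.1.stronglyMeasurable_mk.measurable).max measurable_const).stronglyMeasurable
  have hKK₁ : K =ᵐ[volume] K₁ := by
    filter_upwards [hKint.1.ae_eq_mk] with z hz
    simp only [hK₁_def, ← hz, max_eq_left (hK0 z)]
  have hK₁0 : ∀ z, 0 ≤ K₁ z := fun z => le_max_right _ _
  have hK₁int : Integrable K₁ := hKint.congr hKK₁
  have hK₁one : (∫ z, K₁ z) = 1 := by
    rw [← integral_congr_ae hKK₁]; exact hKone
  -- quasi-measure-preserving affine maps
  have hqmp : ∀ x : ℝ, Measure.QuasiMeasurePreserving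
      (fun z : ℝ => (z - x) / h) volume volume := by
    intro x
    have h1 : Measure.QuasiMeasurePreserving (fun z : ℝ => z * h⁻¹) volume volume := by
      refine ⟨measurable_mul_const _, ?_⟩
      rw [Real.map_volume_mul_right (inv_ne_zero hh.ne')]
      intro s hs
      simp [Measure.smul_apply, hs]
    have h2 := (measurePreserving_sub_right (volume : Measure ℝ) x).quasiMeasurePreserving
    have := h1.comp h2
    simpa [Function.comp_def, div_eq_mul_inv] using this
  have hKae : ∀ x : ℝ, (fun z => K ((z - x) / h)) =ᵐ[volume]
      (fun z => K₁ ((z - x) / h)) := by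
    intro x
    filter_upwards [(hqmp x).ae_eq_comp hKK₁] with z hz using hz
  -- integrability of the shifted kernels
  have hKc : ∀ x : ℝ, Integrable (fun z => K ((z - x) / h)) := fun x =>
    (hKint.comp_div hh.ne').comp_sub_right x
  have hK₁c : ∀ x : ℝ, Integrable (fun z => K₁ ((z - x) / h)) := fun x =>
    (hK₁int.comp_div hh.ne').comp_sub_right x
  have hK₁cl : ∀ z : ℝ, Integrable (fun x => K₁ ((z - x) / h)) := fun z =>
    (hK₁int.comp_div hh.ne').comp_sub_left z
  -- total mass of the shifted kernels
  have hmass : ∀ x : ℝ, (∫ z, K₁ ((z - x) / h) / h) = 1 := by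
    intro x
    rw [MeasureTheory.integral_div]
    rw [integral_sub_right_eq_self (μ := volume) (fun y => K₁ (y / h)) x]
    rw [Measure.integral_comp_div K₁ h, hK₁one, abs_of_pos hh]
    simp [div_self hh.ne']
  have hmassl : ∀ z : ℝ, (∫ x, K₁ ((z - x) / h) / h) = 1 := by
    intro z
    rw [MeasureTheory.integral_div]
    rw [integral_sub_left_eq_self (fun y => K₁ (y / h)) volume z]
    rw [Measure.integral_comp_div K₁ h, hK₁one, abs_of_pos hh]
    simp [div_self hh.ne']
  -- the smoothed gaussian g
  set g : ℝ → ℝ := fun x => ∫ z, K₁ ((z - x) / h) / h * e z with hg_def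
  have hgint : ∀ x : ℝ, Integrable (fun z => K₁ ((z - x) / h) / h * e z) := by
    intro x
    have h1 : Integrable (fun z => K₁ ((z - x) / h) / h) := (hK₁c x).div_const h
    have := h1.bdd_mul (f := e)
      he_cont.aestronglyMeasurable
      (c := 1) (Filter.Eventually.of_forall fun z => by rw [Real.norm_eq_abs, abs_of_pos (he_pos z)]; exact he_le_one z)
    apply this.congr
    filter_upwards with z using mul_comm _ _
  have hgintK : ∀ x : ℝ, Integrable (fun z => K ((z - x) / h) / h * e z) := by
    intro x
    apply (hgint x).congr
    filter_upwards [hKae x] with z hz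
    rw [hz]
  have hgK : ∀ x : ℝ, (∫ z, K ((z - x) / h) / h * e z) = g x := by
    intro x
    apply MeasureTheory.integral_congr_ae
    filter_upwards [hKae x] with z hz
    rw [hz]
  have hgintl : ∀ z : ℝ, Integrable (fun x => K₁ ((z - x) / h) / h * e z) := fun z =>
    ((hK₁cl z).div_const h).mul_const (e z)
  have hg_nonneg : ∀ x, 0 ≤ g x := by
    intro x
    apply MeasureTheory.integral_nonneg
    intro z
    exact mul_nonneg (div_nonneg (hK₁0 _) hh.le) (he_pos z).le
  have hg_le_one : ∀ x, g x ≤ 1 := by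
    intro x
    calc g x ≤ ∫ z, K₁ ((z - x) / h) / h :=
          integral_mono (hgint x) ((hK₁c x).div_const h) (fun z =>
            mul_le_of_le_one_right (div_nonneg (hK₁0 _) hh.le) (he_le_one z))
      _ = 1 := hmass x
  have hgmeas : StronglyMeasurable g := by
    apply StronglyMeasurable.integral_prod_right'
      (f := fun q : ℝ × ℝ => K₁ ((q.2 - q.1) / h) / h * e q.2)
    apply StronglyMeasurable.mul
    · exact ((hK₁meas.measurable.comp
        ((measurable_snd.sub measurable_fst).div_const h)).div_const h).stronglyMeasurable
    · exact he_cont.stronglyMeasurable.comp_measurable measurable_snd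
  -- computation of ∫ g via Tonelli
  have hkey : (∫⁻ x, ENNReal.ofReal (g x)) = ENNReal.ofReal (∫ z, e z) := by
    have h1 : ∀ x, ENNReal.ofReal (g x)
        = ∫⁻ z, ENNReal.ofReal (K₁ ((z - x) / h) / h * e z) := by
      intro x
      exact ofReal_integral_eq_lintegral_ofReal (hgint x)
        (Filter.Eventually.of_forall fun z =>
          mul_nonneg (div_nonneg (hK₁0 _) hh.le) (he_pos z).le)
    simp only [h1]
    rw [lintegral_lintegral_swap]
    · have h2 : ∀ z, (∫⁻ x, ENNReal.ofReal (K₁ ((z - x) / h) / h * e z))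
          = ENNReal.ofReal (e z) := by
        intro z
        rw [← ofReal_integral_eq_lintegral_ofReal (hgintl z)
          (Filter.Eventually.of_forall fun x =>
            mul_nonneg (div_nonneg (hK₁0 _) hh.le) (he_pos z).le)]
        rw [MeasureTheory.integral_mul_const, hmassl z, one_mul]
      simp only [h2]
      rw [← ofReal_integral_eq_lintegral_ofReal heInt
        (Filter.Eventually.of_forall fun z => (he_pos z).le)]
    · apply Measurable.aemeasurable
      apply Measurable.ennreal_ofReal
      apply Measurable.mul
      · exact ((hK₁meas.measurable.comp
          ((measurable_snd.sub measurable_fst).div_const h)).div_const h)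
      · exact he_cont.measurable.comp measurable_snd
  have hgInt : Integrable g := by
    refine ⟨hgmeas.aestronglyMeasurable, ?_⟩
    rw [hasFiniteIntegral_iff_ofReal (Filter.Eventually.of_forall hg_nonneg), hkey]
    exact ENNReal.ofReal_lt_top
  have hgVal : (∫ x, g x) = S := by
    rw [integral_eq_lintegral_of_nonneg_ae (Filter.Eventually.of_forall hg_nonneg)
      hgmeas.aestronglyMeasurable, hkey, ENNReal.toReal_ofReal
      (integral_nonneg fun z => (he_pos z).le), heVal]
  -- constants
  set c : ℝ := c₃ / t₀ ^ q₃ with hc_def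
  have hc : 0 < c := div_pos hc₃ (Real.rpow_pos_of_pos ht₀ _)
  set Δ : ℝ := (T - t₀) / n with hΔ_def
  have hΔpos : 0 < Δ := div_pos hTt hnR
  have hnΔ : (n : ℝ) * Δ = T - t₀ := by
    rw [hΔ_def]
    field_simp
  -- mean value theorem bound
  have hp_diff : ∀ z : ℝ, ∀ s ∈ Icc t₀ T, ∀ t ∈ Icc t₀ T,
      |p t z - p s z| ≤ c * e z * |t - s| := by
    intro z s hs t ht
    have := Convex.norm_image_sub_le_of_norm_hasDerivWithin_le
      (f := fun τ => p τ z) (f' := fun τ => p' τ z) (s := Icc t₀ T) (C := c * e z)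
      (fun u hu => (hderiv z u hu).hasDerivWithinAt)
      (fun u hu => by
        rw [Real.norm_eq_abs]
        calc |p' u z| ≤ c₃ / t₀ ^ q₃ * Real.exp (-m₃ * (z - x₀) ^ 2 / T) :=
              hbound u hu z
          _ = c * e z := by rw [he_eq z])
      (convex_Icc _ _) hs ht
    simpa [Real.norm_eq_abs] using this
  -- pointwise bound on the bias
  have hD : ∀ x : ℝ,
      |(1 / (T - t₀)) * ∑ j ∈ Finset.range n,
        ∫ t in (t₀ + j * (T - t₀) / n)..(t₀ + (j + 1) * (T - t₀) / n),
          ∫ z : ℝ, (K ((z - x) / h) / h) *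
            (p t z - p (t₀ + j * (T - t₀) / n) z)| ≤ c * Δ * g x := by
    intro x
    have hterm : ∀ j ∈ Finset.range n,
        |∫ t in (t₀ + j * (T - t₀) / n)..(t₀ + (j + 1) * (T - t₀) / n),
          ∫ z : ℝ, (K ((z - x) / h) / h) *
            (p t z - p (t₀ + j * (T - t₀) / n) z)| ≤ c * Δ * g x * Δ := by
      intro j hj
      have hjn : (j : ℝ) + 1 ≤ n := by
        have := Finset.mem_range.1 hj
        exact_mod_cast Nat.succ_le_of_lt this
      set a : ℝ := t₀ + j * (T - t₀) / n with ha_def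
      set b : ℝ := t₀ + (j + 1 : ℝ) * (T - t₀) / n with hb_def
      have hba : b - a = Δ := by
        simp only [ha_def, hb_def, hΔ_def]; ring
      have hab : a < b := by
        have : b - a > 0 := hba ▸ hΔpos
        linarith
      have haI : a ∈ Icc t₀ T := by
        constructor
        · simp only [ha_def, le_add_iff_nonneg_right]
          positivity
        · have hj' : (j : ℝ) ≤ n := by linarith
          have : (j : ℝ) * (T - t₀) / n ≤ T - t₀ := by
            rw [div_le_iff₀ hnR]
            nlinarith
          simp only [ha_def]; linarith
      have hbI : b ∈ Icc t₀ T := by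
        constructor
        · simp only [hb_def, le_add_iff_nonneg_right]
          positivity
        · have : ((j : ℝ) + 1) * (T - t₀) / n ≤ T - t₀ := by
            rw [div_le_iff₀ hnR]
            nlinarith
          simp only [hb_def]; linarith
      have hinner : ∀ t ∈ Set.uIoc a b,
          ‖∫ z : ℝ, (K ((z - x) / h) / h) * (p t z - p a z)‖ ≤ c * Δ * g x := by
        intro t htmem
        rw [Set.uIoc_of_le hab.le] at htmem
        have htI : t ∈ Icc t₀ T := ⟨haI.1.trans htmem.1.le, htmem.2.trans hbI.2⟩
        have hta : |t - a| ≤ Δ := by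
          rw [abs_of_nonneg (by linarith [htmem.1] : (0:ℝ) ≤ t - a)]
          linarith [htmem.2, hba]
        have hBint : Integrable (fun z => K ((z - x) / h) / h * (c * Δ * e z)) := by
          have := (hgintK x).const_mul (c * Δ)
          apply this.congr
          filter_upwards with z using by ring
        have hBval : (∫ z, K ((z - x) / h) / h * (c * Δ * e z)) = c * Δ * g x := by
          have : (fun z => K ((z - x) / h) / h * (c * Δ * e z))
              = fun z => (c * Δ) * (K ((z - x) / h) / h * e z) := by
            funext z; ring
          rw [this, MeasureTheory.integral_const_mul, hgK x]
        rw [← hBval]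
        apply MeasureTheory.norm_integral_le_of_norm_le hBint
        filter_upwards with z
        rw [Real.norm_eq_abs, abs_mul,
          abs_of_nonneg (div_nonneg (hK0 _) hh.le)]
        have h1 : |p t z - p a z| ≤ c * e z * Δ := by
          calc |p t z - p a z| ≤ c * e z * |t - a| := hp_diff z a haI t htI
            _ ≤ c * e z * Δ := by
                apply mul_le_mul_of_nonneg_left hta
                positivity
        calc K ((z - x) / h) / h * |p t z - p a z|
            ≤ K ((z - x) / h) / h * (c * e z * Δ) := by
              apply mul_le_mul_of_nonneg_left h1 (div_nonneg (hK0 _) hh.le)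
          _ = K ((z - x) / h) / h * (c * Δ * e z) := by ring
      have := intervalIntegral.norm_integral_le_of_norm_le_const hinner
      rw [Real.norm_eq_abs] at this
      calc |∫ t in a..b, ∫ z : ℝ, (K ((z - x) / h) / h) * (p t z - p a z)|
          ≤ c * Δ * g x * |b - a| := this
        _ = c * Δ * g x * Δ := by rw [hba, abs_of_pos hΔpos]
    have hsum : |∑ j ∈ Finset.range n,
        ∫ t in (t₀ + j * (T - t₀) / n)..(t₀ + (j + 1) * (T - t₀) / n),
          ∫ z : ℝ, (K ((z - x) / h) / h) *
            (p t z - p (t₀ + j * (T - t₀) / n) z)| ≤ n * (c * Δ * g x * Δ) := by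
      calc |∑ j ∈ Finset.range n, _| ≤ ∑ j ∈ Finset.range n,
            |∫ t in (t₀ + j * (T - t₀) / n)..(t₀ + (j + 1) * (T - t₀) / n),
              ∫ z : ℝ, (K ((z - x) / h) / h) *
                (p t z - p (t₀ + j * (T - t₀) / n) z)| :=
          Finset.abs_sum_le_sum_abs _ _
        _ ≤ ∑ j ∈ Finset.range n, c * Δ * g x * Δ := Finset.sum_le_sum hterm
        _ = n * (c * Δ * g x * Δ) := by
            rw [Finset.sum_const, Finset.card_range, nsmul_eq_mul]
    rw [abs_mul, abs_of_pos (by positivity : (0:ℝ) < 1 / (T - t₀))]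
    calc 1 / (T - t₀) * |∑ j ∈ Finset.range n,
          ∫ t in (t₀ + j * (T - t₀) / n)..(t₀ + (j + 1) * (T - t₀) / n),
            ∫ z : ℝ, (K ((z - x) / h) / h) *
              (p t z - p (t₀ + j * (T - t₀) / n) z)|
        ≤ 1 / (T - t₀) * (n * (c * Δ * g x * Δ)) := by
          apply mul_le_mul_of_nonneg_left hsum (by positivity)
      _ = c * Δ * g x := by
          rw [show (n : ℝ) * (c * Δ * g x * Δ) = ((n : ℝ) * Δ) * (c * Δ * g x) by ring,
            hnΔ]
          field_simp
  -- final integration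
  have hfinal : (∫ x : ℝ,
      ((1 / (T - t₀)) * ∑ j ∈ Finset.range n,
        ∫ t in (t₀ + j * (T - t₀) / n)..(t₀ + (j + 1) * (T - t₀) / n),
          ∫ z : ℝ, (K ((z - x) / h) / h) *
            (p t z - p (t₀ + j * (T - t₀) / n) z)) ^ 2)
      ≤ (c * Δ) ^ 2 * S := by
    have step : (∫ x : ℝ,
        ((1 / (T - t₀)) * ∑ j ∈ Finset.range n,
          ∫ t in (t₀ + j * (T - t₀) / n)..(t₀ + (j + 1) * (T - t₀) / n),
            ∫ z : ℝ, (K ((z - x) / h) / h) *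
              (p t z - p (t₀ + j * (T - t₀) / n) z)) ^ 2)
        ≤ ∫ x : ℝ, (c * Δ) ^ 2 * g x := by
      apply integral_mono_of_nonneg
      · filter_upwards with x using sq_nonneg _
      · exact hgInt.const_mul _
      · filter_upwards with x
        have h1 := hD x
        have h2 : ((1 / (T - t₀)) * ∑ j ∈ Finset.range n,
            ∫ t in (t₀ + j * (T - t₀) / n)..(t₀ + (j + 1) * (T - t₀) / n),
              ∫ z : ℝ, (K ((z - x) / h) / h) *
                (p t z - p (t₀ + j * (T - t₀) / n) z)) ^ 2
            ≤ (c * Δ * g x) ^ 2 := by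
          rw [← sq_abs]
          apply pow_le_pow_left₀ (abs_nonneg _) h1
        calc ((1 / (T - t₀)) * ∑ j ∈ Finset.range n,
            ∫ t in (t₀ + j * (T - t₀) / n)..(t₀ + (j + 1) * (T - t₀) / n),
              ∫ z : ℝ, (K ((z - x) / h) / h) *
                (p t z - p (t₀ + j * (T - t₀) / n) z)) ^ 2
            ≤ (c * Δ * g x) ^ 2 := h2
          _ = (c * Δ) ^ 2 * (g x * g x) := by ring
          _ ≤ (c * Δ) ^ 2 * (1 * g x) := by
              apply mul_le_mul_of_nonneg_left _ (sq_nonneg _)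
              exact mul_le_mul_of_nonneg_right (hg_le_one x) (hg_nonneg x)
          _ = (c * Δ) ^ 2 * g x := by ring
    calc _ ≤ ∫ x : ℝ, (c * Δ) ^ 2 * g x := step
      _ = (c * Δ) ^ 2 * S := by rw [MeasureTheory.integral_const_mul, hgVal]
  -- conclude with arithmetic
  have hrpow : t₀ ^ (2 * q₃) = (t₀ ^ q₃) ^ 2 := by
    rw [two_mul, Real.rpow_add ht₀, sq]
  have hΔle : Δ ≤ T / n := by
    rw [hΔ_def]
    gcongr
    linarith
  calc _ ≤ (c * Δ) ^ 2 * S := hfinal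
    _ ≤ (c * (T / n)) ^ 2 * S := by
        apply mul_le_mul_of_nonneg_right _ hSpos.le
        apply pow_le_pow_left₀ (by positivity)
        exact mul_le_mul_of_nonneg_left hΔle hc.le
    _ = T ^ 2 * c₃ ^ 2 * S / (n ^ 2 * t₀ ^ (2 * q₃)) := by
        rw [hrpow, hc_def]
        have h1 : (t₀ : ℝ) ^ q₃ ≠ 0 := (Real.rpow_pos_of_pos ht₀ _).ne'
        field_simp
end
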